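/- Let n, m ∈ ℕ*, A ∈ ℝ^{n×n}, B ∈ ℝ^{n×m}, K ∈ ℝ^{m×n}, ℓ > 0, and suppose there exist a symmetric positive definite matrix P ∈ ℝ^{n×n} and a diagonal matrix D ∈ ℝ^{m×m} with positive diagonal entries such that M1 < 0 holds with C := K, i.e. the matrix [[(A+BK)ᵀP + P(A+BK), PB − (DK)ᵀ],[BᵀP − DK, −2D]] is negative definite. Then there exist M ≥ 1 and a > 0 such that every solution z : [0,∞) → ℝⁿ of the saturated closed-loop system ż = Az + B·sat_ℓ(Kz) satisfies |z(t)| ≤ M·e^{−a t}·|z(0)| for all t ≥ 0 (global exponential stability), where |·| is the Euclidean norm. -/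

import Mathlib

open Matrix

/-- Componentwise saturation function with level `ℓ`. -/
noncomputable def satv {m : ℕ} (ℓ : ℝ) (v : Fin m → ℝ) : Fin m → ℝ :=
  fun k => if |v k| ≤ ℓ then v k else ℓ * v k / |v k|

/-- Euclidean norm on `ℝⁿ`. -/
noncomputable def enorm' {n : ℕ} (z : Fin n → ℝ) : ℝ :=
  Real.sqrt (∑ i, (z i) ^ 2)


lemma quad_scale {N : Type*} [Fintype N] (Q : Matrix N N ℝ) (r : ℝ) (u : N → ℝ) :
    (r • u) ⬝ᵥ Q.mulVec (r • u) = r ^ 2 * (u ⬝ᵥ Q.mulVec u) := by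
  rw [Matrix.mulVec_smul, smul_dotProduct, dotProduct_smul,
    smul_smul, smul_eq_mul, sq]

lemma quad_bounds {N : Type*} [Fintype N] [Nonempty N] [DecidableEq N]
    (Q : Matrix N N ℝ) :
    ∃ c C : ℝ, (∀ x : N → ℝ,
      c * (∑ i, x i ^ 2) ≤ x ⬝ᵥ Q.mulVec x ∧ x ⬝ᵥ Q.mulVec x ≤ C * (∑ i, x i ^ 2))
      ∧ (Q.PosDef → 0 < c) := by
  classical
  set E := EuclideanSpace ℝ N
  have hco : Continuous (fun x : E => (x : N → ℝ) ⬝ᵥ Q.mulVec (x : N → ℝ)) := by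
    have h1 : Continuous (fun x : N → ℝ => x ⬝ᵥ Q.mulVec x) := by
      apply continuous_finset_sum
      intro i _
      exact (continuous_apply i).mul
        (continuous_finset_sum _ fun j _ => continuous_const.mul (continuous_apply j))
    exact h1.comp (PiLp.continuous_ofLp 2 fun _ : N => ℝ)
  have hsph : (Metric.sphere (0 : E) 1).Nonempty :=
    NormedSpace.sphere_nonempty.mpr zero_le_one
  obtain ⟨x₀, hx₀s, hx₀min⟩ := (isCompact_sphere (0 : E) 1).exists_isMinOn hsph hco.continuousOn
  obtain ⟨x₁, hx₁s, hx₁max⟩ := (isCompact_sphere (0 : E) 1).exists_isMaxOn hsph hco.continuousOn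
  set c := (x₀ : N → ℝ) ⬝ᵥ Q.mulVec (x₀ : N → ℝ)
  set C := (x₁ : N → ℝ) ⬝ᵥ Q.mulVec (x₁ : N → ℝ)
  have hnorm : ∀ x : E, ‖x‖ ^ 2 = ∑ i, (x : N → ℝ) i ^ 2 := by
    intro x
    rw [EuclideanSpace.norm_eq, Real.sq_sqrt]
    · simp [Real.norm_eq_abs, sq_abs]
    · positivity
  refine ⟨c, C, fun x => ?_, fun hQ => ?_⟩
  · by_cases hx : x = 0
    · simp [hx, Matrix.mulVec_zero]
    · set r : ℝ := Real.sqrt (∑ i, x i ^ 2) with hr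
      have hsum : 0 < ∑ i, x i ^ 2 := by
        have : ∃ i, x i ≠ 0 := by
          by_contra h
          push_neg at h
          exact hx (funext h)
        obtain ⟨i, hi⟩ := this
        exact Finset.sum_pos' (fun j _ => sq_nonneg _)
          ⟨i, Finset.mem_univ i, by positivity⟩
      have hrpos : 0 < r := Real.sqrt_pos.mpr hsum
      set u : E := WithLp.toLp 2 (r⁻¹ • x : N → ℝ)
      have hu : (u : N → ℝ) = r⁻¹ • x := rfl
      have husph : u ∈ Metric.sphere (0 : E) 1 := by
        rw [Metric.mem_sphere, dist_zero_right]
        have h2 : ‖u‖ ^ 2 = 1 := by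
          rw [hnorm, hu]
          simp only [Pi.smul_apply, smul_eq_mul, mul_pow, ← Finset.mul_sum]
          rw [← Real.sq_sqrt hsum.le, ← hr]
          field_simp
        nlinarith [norm_nonneg u, sq_nonneg (‖u‖ - 1)]
      have hxu : x = r • (u : N → ℝ) := by
        rw [hu, smul_smul, mul_inv_cancel₀ hrpos.ne', one_smul]
      have hfx : x ⬝ᵥ Q.mulVec x = r ^ 2 * ((u : N → ℝ) ⬝ᵥ Q.mulVec (u : N → ℝ)) := by
        rw [hxu] at *
        exact quad_scale Q r u
      have hr2 : r ^ 2 = ∑ i, x i ^ 2 := Real.sq_sqrt hsum.le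
      constructor
      · rw [hfx, ← hr2]
        have h := hx₀min husph
        have h2 : c ≤ (u : N → ℝ) ⬝ᵥ Q.mulVec (u : N → ℝ) := h
        nlinarith [sq_nonneg r]
      · rw [hfx, ← hr2]
        have h := hx₁max husph
        have h2 : (u : N → ℝ) ⬝ᵥ Q.mulVec (u : N → ℝ) ≤ C := h
        nlinarith [sq_nonneg r]
  · have hx₀ne : (x₀ : N → ℝ) ≠ 0 := by
      intro h
      have : ‖x₀‖ = 1 := by simpa [dist_zero_right] using hx₀s
      rw [show x₀ = 0 from WithLp.ofLp_injective 2 (h.trans (WithLp.ofLp_zero 2).symm)] at this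
      simp at this
    have := hQ.dotProduct_mulVec_pos hx₀ne
    simpa using this

lemma sector {m : ℕ} (ℓ : ℝ) (hℓ : 0 < ℓ) (v : Fin m → ℝ) (k : Fin m) :
    (satv ℓ v k - v k) * satv ℓ v k ≤ 0 := by
  unfold satv
  by_cases h : |v k| ≤ ℓ
  · simp [h]
  · simp only [h, if_neg, if_false]
    push_neg at h
    have hne : v k ≠ 0 := by
      intro h0; rw [h0] at h; simp at h; linarith
    have habs : |v k| > 0 := abs_pos.mpr hne
    have : (ℓ * v k / |v k| - v k) * (ℓ * v k / |v k|) = ℓ * (ℓ - |v k|) := by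
      field_simp
      nlinarith [sq_abs (v k)]
    rw [this]
    nlinarith

lemma dp2 {α β : Type*} [Fintype α] [Fintype β] (M : Matrix α β ℝ) (x : β → ℝ) (y : α → ℝ) :
    x ⬝ᵥ (Mᵀ *ᵥ y) = (M *ᵥ x) ⬝ᵥ y := by
  rw [Matrix.dotProduct_mulVec, Matrix.vecMul_transpose]

lemma key_identity (n m : ℕ)
    (A : Matrix (Fin n) (Fin n) ℝ) (B : Matrix (Fin n) (Fin m) ℝ)
    (K : Matrix (Fin m) (Fin n) ℝ) (P : Matrix (Fin n) (Fin n) ℝ)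
    (D : Matrix (Fin m) (Fin m) ℝ) (z₀ : Fin n → ℝ) (φ : Fin m → ℝ) :
    ((A + B * K) *ᵥ z₀ + B *ᵥ φ) ⬝ᵥ P *ᵥ z₀ + z₀ ⬝ᵥ P *ᵥ ((A + B * K) *ᵥ z₀ + B *ᵥ φ)
      = (Sum.elim z₀ φ) ⬝ᵥ (Matrix.fromBlocks ((A + B * K)ᵀ * P + P * (A + B * K))
          (P * B - (D * K)ᵀ) (Bᵀ * P - D * K) ((-2 : ℝ) • D)) *ᵥ (Sum.elim z₀ φ)
        + 2 * (φ ⬝ᵥ (D * K) *ᵥ z₀) + 2 * (φ ⬝ᵥ D *ᵥ φ) := by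
  have hc : (D *ᵥ (K *ᵥ z₀)) ⬝ᵥ φ = φ ⬝ᵥ (D *ᵥ (K *ᵥ z₀)) := dotProduct_comm _ _
  simp only [Matrix.fromBlocks_mulVec, sumElim_dotProduct_sumElim,
    Sum.elim_comp_inl, Sum.elim_comp_inr, Matrix.transpose_add, Matrix.transpose_mul,
    Matrix.add_mulVec, Matrix.sub_mulVec, Matrix.mulVec_add, ← Matrix.mulVec_mulVec,
    add_dotProduct, dotProduct_add, dotProduct_sub,
    Matrix.smul_mulVec, dotProduct_smul, smul_eq_mul, dp2, hc]
  ring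

theorem stmt8 (n m : ℕ) (hn : 0 < n) (hm : 0 < m)
    (A : Matrix (Fin n) (Fin n) ℝ) (B : Matrix (Fin n) (Fin m) ℝ)
    (K : Matrix (Fin m) (Fin n) ℝ) (ℓ : ℝ) (hℓ : 0 < ℓ)
    (P : Matrix (Fin n) (Fin n) ℝ) (hP : P.PosDef)
    (D : Matrix (Fin m) (Fin m) ℝ) (hDdiag : D.IsDiag) (hDpos : ∀ i, 0 < D i i)
    (hM1 : (-(Matrix.fromBlocks ((A + B * K)ᵀ * P + P * (A + B * K))
        (P * B - (D * K)ᵀ) (Bᵀ * P - D * K) ((-2 : ℝ) • D))).PosDef) :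
    ∃ (M a : ℝ), 1 ≤ M ∧ 0 < a ∧
      ∀ z : ℝ → (Fin n → ℝ),
        (∀ t : ℝ, 0 ≤ t →
          HasDerivAt z (A.mulVec (z t) + B.mulVec (satv ℓ (K.mulVec (z t)))) t) →
        ∀ t : ℝ, 0 ≤ t →
          enorm' (z t) ≤ M * Real.exp (-a * t) * enorm' (z 0) := by
  classical
  haveI : Nonempty (Fin n) := ⟨⟨0, hn⟩⟩
  haveI : Nonempty (Fin m) := ⟨⟨0, hm⟩⟩
  -- bounds for P
  obtain ⟨cP, CP, hPbd, hPc⟩ := quad_bounds P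
  have hcP : 0 < cP := hPc hP
  -- bounds for the negated block matrix
  set Mb : Matrix (Fin n ⊕ Fin m) (Fin n ⊕ Fin m) ℝ :=
    Matrix.fromBlocks ((A + B * K)ᵀ * P + P * (A + B * K))
      (P * B - (D * K)ᵀ) (Bᵀ * P - D * K) ((-2 : ℝ) • D) with hMb
  obtain ⟨c₀, C₀, hQbd, hQc⟩ := quad_bounds (-Mb)
  have hc₀ : 0 < c₀ := hQc hM1
  -- cP ≤ CP
  have hcPCP : cP ≤ CP := by
    have hx := hPbd (Pi.single (⟨0, hn⟩ : Fin n) 1)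
    have hs : (∑ i, (Pi.single (⟨0, hn⟩ : Fin n) 1 : Fin n → ℝ) i ^ 2) = 1 := by
      rw [Finset.sum_eq_single (⟨0, hn⟩ : Fin n)] <;> simp +contextual [Pi.single_apply]
    rw [hs] at hx
    linarith [hx.1, hx.2]
  have hCP : 0 < CP := lt_of_lt_of_le hcP hcPCP
  set a : ℝ := c₀ / CP with ha
  have hapos : 0 < a := div_pos hc₀ hCP
  set M : ℝ := max 1 (Real.sqrt (CP / cP)) with hM
  refine ⟨M, a / 2, le_max_left _ _, by positivity, ?_⟩
  intro z hz t ht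
  set w : ℝ → Fin n → ℝ := fun s => A *ᵥ z s + B *ᵥ satv ℓ (K *ᵥ z s) with hw
  set V : ℝ → ℝ := fun s => z s ⬝ᵥ P *ᵥ z s with hV
  -- derivative of V
  have hVd : ∀ s : ℝ, 0 ≤ s →
      HasDerivAt V (w s ⬝ᵥ P *ᵥ z s + z s ⬝ᵥ P *ᵥ w s) s := by
    intro s hs
    have hci : ∀ i, HasDerivAt (fun r => z r i) (w s i) s :=
      fun i => hasDerivAt_pi.mp (hz s hs) i
    have hrow : ∀ i, HasDerivAt (fun r => (P *ᵥ z r) i) ((P *ᵥ w s) i) s := by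
      intro i
      simpa [Matrix.mulVec, dotProduct] using
        (HasDerivAt.fun_sum (fun j (_ : j ∈ Finset.univ) => (hci j).const_mul (P i j)))
    have hsum : HasDerivAt (fun r => ∑ i, z r i * (P *ᵥ z r) i)
        (∑ i, (w s i * (P *ᵥ z s) i + z s i * (P *ᵥ w s) i)) s :=
      HasDerivAt.fun_sum fun i _ => (hci i).mul (hrow i)
    have hfun : V = fun r => ∑ i, z r i * (P *ᵥ z r) i := rfl
    rw [hfun]
    convert hsum using 1
    rw [Finset.sum_add_distrib]
    rfl
  -- the key differential inequality
  have hkey : ∀ s : ℝ, 0 ≤ s →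
      w s ⬝ᵥ P *ᵥ z s + z s ⬝ᵥ P *ᵥ w s ≤ -a * V s := by
    intro s hs
    set φ : Fin m → ℝ := satv ℓ (K *ᵥ z s) - K *ᵥ z s with hφ
    have hwd : w s = (A + B * K) *ᵥ z s + B *ᵥ φ := by
      rw [hw, hφ]
      simp only [Matrix.add_mulVec, Matrix.mulVec_sub, ← Matrix.mulVec_mulVec]
      abel
    rw [hwd, key_identity n m A B K P D (z s) φ]
    -- sector term
    have hsec : φ ⬝ᵥ (D * K) *ᵥ z s + φ ⬝ᵥ D *ᵥ φ ≤ 0 := by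
      have hvφ : K *ᵥ z s + φ = satv ℓ (K *ᵥ z s) := by rw [hφ]; abel
      have h1 : φ ⬝ᵥ (D * K) *ᵥ z s + φ ⬝ᵥ D *ᵥ φ = φ ⬝ᵥ D *ᵥ (satv ℓ (K *ᵥ z s)) := by
        rw [← Matrix.mulVec_mulVec, ← dotProduct_add, ← Matrix.mulVec_add, hvφ]
      rw [h1]
      have h2 : ∀ k, (D *ᵥ satv ℓ (K *ᵥ z s)) k = D k k * satv ℓ (K *ᵥ z s) k := by
        intro k
        simp only [Matrix.mulVec, dotProduct]
        rw [Finset.sum_eq_single k]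
        · intro j _ hj
          rw [hDdiag (Ne.symm hj), zero_mul]
        · intro h; exact absurd (Finset.mem_univ k) h
      unfold dotProduct
      apply Finset.sum_nonpos
      intro k _
      rw [h2 k, hφ]
      have := sector ℓ hℓ (K *ᵥ z s) k
      have hD := hDpos k
      simp only [Pi.sub_apply]
      nlinarith
    -- quadratic bound on block term
    have hblk : (Sum.elim (z s) φ) ⬝ᵥ Mb *ᵥ (Sum.elim (z s) φ) ≤ -a * V s := by
      have h3 := (hQbd (Sum.elim (z s) φ)).1
      have hneg : (Sum.elim (z s) φ) ⬝ᵥ (-Mb) *ᵥ (Sum.elim (z s) φ)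
          = -((Sum.elim (z s) φ) ⬝ᵥ Mb *ᵥ (Sum.elim (z s) φ)) := by
        rw [Matrix.neg_mulVec, dotProduct_neg]
      rw [hneg] at h3
      have hsum2 : (∑ i, (Sum.elim (z s) φ) i ^ 2)
          = (∑ i, z s i ^ 2) + (∑ k, φ k ^ 2) := by
        rw [Fintype.sum_sum_type]
        rfl
      have hzsq : (∑ i, z s i ^ 2) ≤ ∑ i, (Sum.elim (z s) φ) i ^ 2 := by
        rw [hsum2]
        have : (0:ℝ) ≤ ∑ k, φ k ^ 2 := Finset.sum_nonneg fun k _ => sq_nonneg _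
        linarith
      have hVle : V s ≤ CP * ∑ i, z s i ^ 2 := (hPbd (z s)).2
      have : a * V s ≤ c₀ * ∑ i, z s i ^ 2 := by
        rw [ha]
        calc c₀ / CP * V s ≤ c₀ / CP * (CP * ∑ i, z s i ^ 2) := by
              apply mul_le_mul_of_nonneg_left hVle (by positivity)
          _ = c₀ * ∑ i, z s i ^ 2 := by field_simp
      nlinarith [mul_le_mul_of_nonneg_left hzsq hc₀.le]
    linarith
  -- Gronwall via monotonicity
  have hVexp : ∀ s : ℝ, 0 ≤ s → V s ≤ V 0 * Real.exp (-a * s) := by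
    intro s hs
    set g : ℝ → ℝ := fun r => V r * Real.exp (a * r) with hg
    have hgd : ∀ r : ℝ, 0 ≤ r → HasDerivAt g
        ((w r ⬝ᵥ P *ᵥ z r + z r ⬝ᵥ P *ᵥ w r) * Real.exp (a * r)
          + V r * (Real.exp (a * r) * a)) r := by
      intro r hr
      have he : HasDerivAt (fun r : ℝ => Real.exp (a * r)) (Real.exp (a * r) * a) r := by
        simpa using ((hasDerivAt_id r).const_mul a).exp
      exact (hVd r hr).mul he
    have hanti : AntitoneOn g (Set.Ici 0) := by
      apply antitoneOn_of_deriv_nonpos (convex_Ici 0)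
      · intro r hr
        exact ((hgd r hr).continuousAt).continuousWithinAt
      · intro r hr
        rw [interior_Ici] at hr
        exact ((hgd r (le_of_lt hr)).differentiableAt).differentiableWithinAt
      · intro r hr
        rw [interior_Ici] at hr
        rw [(hgd r (le_of_lt hr)).deriv]
        have h1 := hkey r (le_of_lt hr)
        have h2 : (0:ℝ) < Real.exp (a * r) := Real.exp_pos _
        nlinarith
    have := hanti (Set.self_mem_Ici) (Set.mem_Ici.mpr hs) hs
    rw [hg] at this
    simp only [mul_zero, Real.exp_zero, mul_one] at this
    have h2 : (0:ℝ) < Real.exp (a * s) := Real.exp_pos _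
    rw [neg_mul, Real.exp_neg, ← div_eq_mul_inv, le_div_iff₀ h2]
    exact this
  -- conclude
  set St : ℝ := ∑ i, z t i ^ 2 with hSt'
  set S0 : ℝ := ∑ i, z 0 i ^ 2 with hS0'
  have hS0nn : 0 ≤ S0 := Finset.sum_nonneg fun i _ => sq_nonneg _
  have hchain : cP * St ≤ CP * S0 * Real.exp (-a * t) := by
    have h1 := (hPbd (z t)).1
    have h2 := (hPbd (z 0)).2
    have h3 := hVexp t ht
    nlinarith [Real.exp_pos (-a * t), mul_le_mul_of_nonneg_right h2 (Real.exp_nonneg (-a * t))]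
  have hStle : St ≤ (CP / cP) * (Real.exp (-a * t) * S0) := by
    calc St = (cP * St) / cP := by field_simp
      _ ≤ (CP * S0 * Real.exp (-a * t)) / cP := by gcongr
      _ = (CP / cP) * (Real.exp (-a * t) * S0) := by ring
  have hsqexp : Real.sqrt (Real.exp (-a * t)) = Real.exp (-(a / 2) * t) := by
    rw [show (-a * t) = (-(a / 2) * t) + (-(a / 2) * t) by ring, Real.exp_add,
      Real.sqrt_mul_self (Real.exp_nonneg _)]
  have hMge : Real.sqrt (CP / cP) ≤ M := le_max_right _ _
  show Real.sqrt St ≤ M * Real.exp (-(a / 2) * t) * Real.sqrt S0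
  calc Real.sqrt St ≤ Real.sqrt ((CP / cP) * (Real.exp (-a * t) * S0)) :=
        Real.sqrt_le_sqrt hStle
    _ = Real.sqrt (CP / cP) * (Real.exp (-(a / 2) * t) * Real.sqrt S0) := by
        rw [Real.sqrt_mul (by positivity), Real.sqrt_mul (Real.exp_nonneg _), hsqexp]
    _ ≤ M * (Real.exp (-(a / 2) * t) * Real.sqrt S0) := by
        apply mul_le_mul_of_nonneg_right hMge (by positivity)
    _ = M * Real.exp (-(a / 2) * t) * Real.sqrt S0 := by ring
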